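/- Let Y ∼ (1/2)N(−θ*,1) + (1/2)N(θ*,1), f(θ) = E[Y·tanh(θY)], and q(θ) = f(θ)/θ. Then q is decreasing on (0,∞), and for θ > 0, q'(θ) = −E[(Y·sinh(2θY) − 2θY²)/(2θ²·cosh²(θY))] ≤ −(2θ/3)·E[Y⁴/cosh²(θY)]. -/

import Mathlib

open MeasureTheory ProbabilityTheory
open scoped ENNReal

/-- The symmetric two-component Gaussian mixture `(1/2)N(−s,1) + (1/2)N(s,1)`. -/
noncomputable def mixG (s : ℝ) : Measure ℝ :=
  (1 / 2 : ℝ≥0∞) • gaussianReal (-s) 1 + (1 / 2 : ℝ≥0∞) • gaussianReal s 1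

/-- The population EM map `f(θ) = E[Y·tanh(θY)]`, `Y ∼ mixG s`. -/
noncomputable def emMap (s θ : ℝ) : ℝ := ∫ y, y * Real.tanh (θ * y) ∂(mixG s)

section Aux

open Real

lemma my_cosh_ge (x : ℝ) : 1 + x ^ 2 / 2 ≤ Real.cosh x := by
  wlog hx : 0 ≤ x with H
  · have := H (-x) (by linarith [le_of_not_ge hx])
    simpa using this
  have mono : MonotoneOn (fun x => Real.cosh x - 1 - x ^ 2 / 2) (Set.Ici 0) := by
    apply monotoneOn_of_deriv_nonneg (convex_Ici 0)
    · exact ((Real.continuous_cosh.sub continuous_const).sub (by continuity)).continuousOn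
    · intro t ht
      apply DifferentiableAt.differentiableWithinAt
      fun_prop
    · intro t ht
      simp only [interior_Ici, Set.mem_Ioi] at ht
      have : HasDerivAt (fun x => Real.cosh x - 1 - x ^ 2 / 2) (Real.sinh t - t) t := by
        have h1 := (Real.hasDerivAt_cosh t).sub_const 1
        have h2 : HasDerivAt (fun x : ℝ => x ^ 2 / 2) t t := by
          simpa using (hasDerivAt_pow 2 t).div_const 2
        exact h1.sub h2
      rw [this.deriv]
      have := Real.self_le_sinh_iff.mpr ht.le
      linarith
  have := mono (Set.self_mem_Ici) (Set.mem_Ici.mpr hx) hx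
  simp at this
  linarith

lemma my_sinh_ge (x : ℝ) (hx : 0 ≤ x) : x + x ^ 3 / 6 ≤ Real.sinh x := by
  have mono : MonotoneOn (fun x => Real.sinh x - x - x ^ 3 / 6) (Set.Ici 0) := by
    apply monotoneOn_of_deriv_nonneg (convex_Ici 0)
    · exact ((Real.continuous_sinh.sub continuous_id).sub (by continuity)).continuousOn
    · intro t ht
      apply DifferentiableAt.differentiableWithinAt
      fun_prop
    · intro t ht
      have : HasDerivAt (fun x => Real.sinh x - x - x ^ 3 / 6) (Real.cosh t - 1 - t ^ 2 / 2) t := by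
        have h1 := (Real.hasDerivAt_sinh t).sub (hasDerivAt_id t)
        have h2 : HasDerivAt (fun x : ℝ => x ^ 3 / 6) (t ^ 2 / 2) t := by
          have := (hasDerivAt_pow 3 t).div_const 6
          norm_num at this
          rw [show t ^ 2 / 2 = 3 * t ^ 2 / 6 by ring]
          exact this
        exact h1.sub h2
      rw [this.deriv]
      linarith [my_cosh_ge t]
  have := mono (Set.self_mem_Ici) (Set.mem_Ici.mpr hx) hx
  simp at this
  linarith

lemma my_hasDerivAt_tanh (x : ℝ) : HasDerivAt Real.tanh (1 / Real.cosh x ^ 2) x := by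
  have h : HasDerivAt (fun y => Real.sinh y / Real.cosh y)
      ((Real.cosh x * Real.cosh x - Real.sinh x * Real.sinh x) / Real.cosh x ^ 2) x :=
    (Real.hasDerivAt_sinh x).div (Real.hasDerivAt_cosh x) (ne_of_gt (Real.cosh_pos x))
  have h2 : Real.cosh x * Real.cosh x - Real.sinh x * Real.sinh x = 1 := by
    have := Real.cosh_sq_sub_sinh_sq x; nlinarith
  have h3 : Real.tanh = fun y => Real.sinh y / Real.cosh y := by
    funext y; exact Real.tanh_eq_sinh_div_cosh y
  rw [h2] at h
  rw [h3]
  exact h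

lemma my_continuous_tanh : Continuous Real.tanh := by
  have h3 : Real.tanh = fun y => Real.sinh y / Real.cosh y := by
    funext y; exact Real.tanh_eq_sinh_div_cosh y
  rw [h3]
  exact Real.continuous_sinh.div Real.continuous_cosh fun x => ne_of_gt (Real.cosh_pos x)

lemma my_abs_le_quartic (x : ℝ) : |x| * 1 ≤ (1 + x ^ 2) ^ 2 := by
  nlinarith [abs_nonneg x, sq_abs x, sq_nonneg (1 - |x|), sq_nonneg x, sq_nonneg (x ^ 2)]

lemma my_abs_tanh_le (x : ℝ) : |Real.tanh x| ≤ 1 := by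
  rw [Real.tanh_eq_sinh_div_cosh, abs_div, abs_of_pos (Real.cosh_pos x),
    div_le_one (Real.cosh_pos x)]
  have h := Real.cosh_sq_sub_sinh_sq x
  nlinarith [abs_nonneg (Real.sinh x), sq_abs (Real.sinh x), Real.cosh_pos x,
    abs_nonneg (Real.sinh x - Real.cosh x)]

lemma my_pt_deriv (y t : ℝ) :
    HasDerivAt (fun t : ℝ => y * Real.tanh (t * y)) (y ^ 2 / Real.cosh (t * y) ^ 2) t := by
  have h1 : HasDerivAt (fun t : ℝ => t * y) y t := hasDerivAt_mul_const y
  have h2 := (my_hasDerivAt_tanh (t * y)).comp t h1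
  have h3 := h2.const_mul y
  rw [show y ^ 2 / Real.cosh (t * y) ^ 2 = y * (1 / Real.cosh (t * y) ^ 2 * y) by ring]
  exact h3

lemma my_int_gauss_pow (k : ℕ) :
    Integrable (fun x : ℝ => x ^ k * Real.exp (-(2⁻¹:ℝ) * x ^ 2)) volume := by
  have := integrable_rpow_mul_exp_neg_mul_sq (by norm_num : (0:ℝ) < 2⁻¹) (s := (k:ℝ))
    (lt_of_lt_of_le neg_one_lt_zero (Nat.cast_nonneg k))
  simpa [Real.rpow_natCast] using this

lemma my_int_base :
    Integrable (fun x : ℝ => (1 + x ^ 2) ^ 2 * Real.exp (-(2⁻¹:ℝ) * x ^ 2)) volume := by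
  have h := ((my_int_gauss_pow 0).add ((my_int_gauss_pow 2).const_mul 2)).add (my_int_gauss_pow 4)
  refine h.congr (Filter.Eventually.of_forall fun x => ?_)
  simp only [Pi.add_apply]
  ring

lemma my_int_quartic_gauss (m : ℝ) :
    Integrable (fun x : ℝ => (1 + x ^ 2) ^ 2) (gaussianReal m 1) := by
  have hmap : gaussianReal m 1 = (gaussianReal 0 1).map (· + m) := by
    simpa using (gaussianReal_map_add_const (μ := 0) (v := 1) m).symm
  rw [hmap, integrable_map_measure
    (by exact (by continuity : Continuous fun x : ℝ => (1 + x ^ 2) ^ 2).aestronglyMeasurable)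
    (measurable_add_const m).aemeasurable]
  have hden : gaussianReal 0 1 = volume.withDensity (gaussianPDF 0 1) :=
    gaussianReal_of_var_ne_zero 0 one_ne_zero
  rw [Function.comp_def, hden, integrable_withDensity_iff (measurable_gaussianPDF 0 1)
    (Filter.Eventually.of_forall fun x => ENNReal.ofReal_lt_top)]
  have key : ∀ x : ℝ, (1 + (x + m) ^ 2) ^ 2 ≤ (2 * (1 + m ^ 2) * (1 + x ^ 2)) ^ 2 := by
    intro x
    apply pow_le_pow_left₀ (by positivity)
    nlinarith [sq_nonneg (x - m), sq_nonneg (m * x)]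
  refine Integrable.mono' (my_int_base.const_mul
    ((2 * (1 + m ^ 2)) ^ 2 * (Real.sqrt (2 * Real.pi))⁻¹))
    ?_ (Filter.Eventually.of_forall fun x => ?_)
  · apply Measurable.aestronglyMeasurable
    apply Measurable.mul (by measurability)
    exact (measurable_gaussianPDF 0 1).ennreal_toReal
  · have hpdf : (gaussianPDF 0 1 x).toReal = gaussianPDFReal 0 1 x :=
      ENNReal.toReal_ofReal (gaussianPDFReal_nonneg 0 1 x)
    rw [Real.norm_eq_abs, abs_mul, hpdf]
    have h1 : gaussianPDFReal 0 1 x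
        = (Real.sqrt (2 * Real.pi))⁻¹ * Real.exp (-(2⁻¹:ℝ) * x ^ 2) := by
      rw [gaussianPDFReal]
      push_cast
      congr 1
      · norm_num
      · congr 1
        ring
    rw [h1, abs_of_nonneg (by positivity), abs_of_nonneg (by positivity)]
    have h2 := key x
    calc (1 + (x + m) ^ 2) ^ 2 * ((Real.sqrt (2 * Real.pi))⁻¹ * Real.exp (-(2⁻¹:ℝ) * x ^ 2))
        ≤ (2 * (1 + m ^ 2) * (1 + x ^ 2)) ^ 2
            * ((Real.sqrt (2 * Real.pi))⁻¹ * Real.exp (-(2⁻¹:ℝ) * x ^ 2)) := by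
          apply mul_le_mul_of_nonneg_right h2 (by positivity)
      _ = (2 * (1 + m ^ 2)) ^ 2 * (Real.sqrt (2 * Real.pi))⁻¹
            * ((1 + x ^ 2) ^ 2 * Real.exp (-(2⁻¹:ℝ) * x ^ 2)) := by
          ring

lemma my_int_mix (s : ℝ) : Integrable (fun x : ℝ => (1 + x ^ 2) ^ 2) (mixG s) := by
  rw [mixG]
  exact ((my_int_quartic_gauss (-s)).smul_measure (by norm_num)).add_measure
    ((my_int_quartic_gauss s).smul_measure (by norm_num))

lemma my_int_dom (s : ℝ) {g : ℝ → ℝ} (hg : AEStronglyMeasurable g (mixG s)) {C : ℝ}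
    (h : ∀ x, ‖g x‖ ≤ C * (1 + x ^ 2) ^ 2) : Integrable g (mixG s) :=
  Integrable.mono' ((my_int_mix s).const_mul C) hg (Filter.Eventually.of_forall h)

lemma mixG_univ (s : ℝ) : mixG s Set.univ = 1 := by
  rw [mixG]
  simp only [Measure.add_apply, Measure.smul_apply, measure_univ, smul_eq_mul, mul_one]
  rw [ENNReal.div_add_div_same, one_add_one_eq_two]
  exact ENNReal.div_self two_ne_zero ENNReal.ofNat_ne_top

lemma mixG_singleton (s : ℝ) : mixG s {0} = 0 := by
  have h1 : gaussianReal (-s) 1 {(0:ℝ)} = 0 :=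
    (gaussianReal_absolutelyContinuous (-s) one_ne_zero) (measure_singleton 0)
  have h2 : gaussianReal s 1 {(0:ℝ)} = 0 :=
    (gaussianReal_absolutelyContinuous s one_ne_zero) (measure_singleton 0)
  rw [mixG]
  simp [Measure.add_apply, h1, h2]

lemma my_K_pos (s θ : ℝ) (hθ : 0 < θ) :
    0 < ∫ y, y ^ 4 / Real.cosh (θ * y) ^ 2 ∂(mixG s) := by
  have hint : Integrable (fun y : ℝ => y ^ 4 / Real.cosh (θ * y) ^ 2) (mixG s) := by
    refine my_int_dom s ?_ (C := 1) fun x => ?_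
    · exact (Continuous.aestronglyMeasurable (by
        exact Continuous.div (by continuity) (by continuity)
          fun y => by positivity))
    · rw [Real.norm_eq_abs, abs_of_nonneg (by positivity), one_mul]
      have hc := Real.one_le_cosh (θ * x)
      have h1 : x ^ 4 / Real.cosh (θ * x) ^ 2 ≤ x ^ 4 := by
        apply div_le_self (by positivity)
        nlinarith
      nlinarith [sq_nonneg x]
  rw [integral_pos_iff_support_of_nonneg_ae
    (Filter.Eventually.of_forall fun y => by positivity) hint]
  have hsub : ({(0:ℝ)}ᶜ : Set ℝ) ⊆ Function.support (fun y => y ^ 4 / Real.cosh (θ * y) ^ 2) := by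
    intro y hy
    have hy0 : y ≠ 0 := hy
    simp only [Function.mem_support]
    positivity
  refine lt_of_lt_of_le ?_ (measure_mono hsub)
  rw [measure_compl (measurableSet_singleton 0) (by simp [mixG_singleton])]
  rw [mixG_singleton, mixG_univ]
  norm_num

lemma my_emMap_deriv (s θ : ℝ) :
    HasDerivAt (emMap s) (∫ y, y ^ 2 / Real.cosh (θ * y) ^ 2 ∂(mixG s)) θ ∧
    Integrable (fun y : ℝ => y ^ 2 / Real.cosh (θ * y) ^ 2) (mixG s) := by
  have cont : ∀ t : ℝ, Continuous fun y : ℝ => y * Real.tanh (t * y) := by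
    intro t
    exact continuous_id.mul (my_continuous_tanh.comp (continuous_const.mul continuous_id))
  have main := hasDerivAt_integral_of_dominated_loc_of_deriv_le
    (μ := mixG s) (F := fun t y => y * Real.tanh (t * y))
    (F' := fun t y => y ^ 2 / Real.cosh (t * y) ^ 2)
    (x₀ := θ) (bound := fun y => (1 + y ^ 2) ^ 2) (Metric.ball_mem_nhds θ one_pos)
    (Filter.Eventually.of_forall fun t => (cont t).aestronglyMeasurable)
    (by
      refine my_int_dom s ((cont θ).aestronglyMeasurable) (C := 1) fun x => ?_
      rw [Real.norm_eq_abs, abs_mul, one_mul]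
      calc |x| * |Real.tanh (θ * x)| ≤ |x| * 1 :=
            mul_le_mul_of_nonneg_left (my_abs_tanh_le _) (abs_nonneg x)
        _ ≤ (1 + x ^ 2) ^ 2 := my_abs_le_quartic x)
    (Continuous.aestronglyMeasurable (by
      exact Continuous.div (by continuity) (by continuity) fun y => by positivity))
    (Filter.Eventually.of_forall fun y => by
      intro x hx
      rw [Real.norm_eq_abs, abs_of_nonneg (by positivity)]
      have hc := Real.one_le_cosh (x * y)
      have h1 : y ^ 2 / Real.cosh (x * y) ^ 2 ≤ y ^ 2 := by
        apply div_le_self (by positivity)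
        nlinarith
      nlinarith [sq_nonneg y, sq_nonneg (y ^ 2)])
    (my_int_mix s)
    (Filter.Eventually.of_forall fun y => fun x _ => my_pt_deriv y x)
  refine ⟨?_, ?_⟩
  · have := main.2
    exact this
  · have := main.1
    simpa only [mul_comm] using this

end Aux

/-- `q(θ) = f(θ)/θ` is decreasing on `(0,∞)`, with the stated formula and bound
for `q'(θ)` for `θ > 0`. -/
theorem stmt_6 (s : ℝ) (hs : 0 ≤ s) :
    StrictAntiOn (fun θ : ℝ => emMap s θ / θ) (Set.Ioi 0) ∧
    ∀ θ : ℝ, 0 < θ →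
      deriv (fun t : ℝ => emMap s t / t) θ =
        -∫ y, (y * Real.sinh (2 * θ * y) - 2 * θ * y ^ 2) /
            (2 * θ ^ 2 * Real.cosh (θ * y) ^ 2) ∂(mixG s) ∧
      deriv (fun t : ℝ => emMap s t / t) θ ≤
        -(2 * θ / 3) * ∫ y, y ^ 4 / Real.cosh (θ * y) ^ 2 ∂(mixG s) := by
  have int_f : ∀ θ : ℝ, Integrable (fun y : ℝ => y * Real.tanh (θ * y)) (mixG s) := by
    intro θ
    refine my_int_dom s (Continuous.aestronglyMeasurable (by
      exact continuous_id.mul (my_continuous_tanh.comp (continuous_const.mul continuous_id))))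
      (C := 1) fun x => ?_
    rw [Real.norm_eq_abs, abs_mul, one_mul]
    calc |x| * |Real.tanh (θ * x)| ≤ |x| * 1 :=
          mul_le_mul_of_nonneg_left (my_abs_tanh_le _) (abs_nonneg x)
      _ ≤ (1 + x ^ 2) ^ 2 := my_abs_le_quartic x
  -- derivative of q at θ > 0
  have hq : ∀ θ : ℝ, 0 < θ →
      HasDerivAt (fun t : ℝ => emMap s t / t)
        (((∫ y, y ^ 2 / Real.cosh (θ * y) ^ 2 ∂(mixG s)) * θ - emMap s θ * 1) / θ ^ 2) θ := by
    intro θ hθ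
    exact (my_emMap_deriv s θ).1.div (hasDerivAt_id θ) (ne_of_gt hθ)
  -- the integral formula for the derivative
  have hkey : ∀ θ : ℝ, 0 < θ →
      deriv (fun t : ℝ => emMap s t / t) θ =
        -∫ y, (y * Real.sinh (2 * θ * y) - 2 * θ * y ^ 2) /
            (2 * θ ^ 2 * Real.cosh (θ * y) ^ 2) ∂(mixG s) := by
    intro θ hθ
    have hcongr : ∀ y : ℝ, (y * Real.sinh (2 * θ * y) - 2 * θ * y ^ 2) /
        (2 * θ ^ 2 * Real.cosh (θ * y) ^ 2)
        = (1 / θ ^ 2) * (y * Real.tanh (θ * y)) - (1 / θ) * (y ^ 2 / Real.cosh (θ * y) ^ 2) := by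
      intro y
      have hc : Real.cosh (θ * y) ≠ 0 := ne_of_gt (Real.cosh_pos _)
      have h2 : 2 * θ * y = 2 * (θ * y) := by ring
      rw [h2, Real.sinh_two_mul, Real.tanh_eq_sinh_div_cosh]
      field_simp
    have hJ : ∫ y, (y * Real.sinh (2 * θ * y) - 2 * θ * y ^ 2) /
        (2 * θ ^ 2 * Real.cosh (θ * y) ^ 2) ∂(mixG s)
        = (1 / θ ^ 2) * emMap s θ
          - (1 / θ) * ∫ y, y ^ 2 / Real.cosh (θ * y) ^ 2 ∂(mixG s) := by
      rw [show (fun y : ℝ => (y * Real.sinh (2 * θ * y) - 2 * θ * y ^ 2) /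
          (2 * θ ^ 2 * Real.cosh (θ * y) ^ 2))
          = fun y : ℝ => (1 / θ ^ 2) * (y * Real.tanh (θ * y))
            - (1 / θ) * (y ^ 2 / Real.cosh (θ * y) ^ 2) from funext hcongr]
      rw [integral_sub (((int_f θ)).const_mul _) (((my_emMap_deriv s θ).2).const_mul _),
        integral_const_mul, integral_const_mul, emMap]
    rw [(hq θ hθ).deriv, hJ]
    field_simp
    ring
  -- the bound
  have hbound : ∀ θ : ℝ, 0 < θ →
      deriv (fun t : ℝ => emMap s t / t) θ ≤
        -(2 * θ / 3) * ∫ y, y ^ 4 / Real.cosh (θ * y) ^ 2 ∂(mixG s) := by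
    intro θ hθ
    rw [hkey θ hθ]
    rw [neg_mul, neg_le_neg_iff]
    have intK : Integrable (fun y : ℝ => y ^ 4 / Real.cosh (θ * y) ^ 2) (mixG s) := by
      refine my_int_dom s (Continuous.aestronglyMeasurable (by
        exact Continuous.div (by continuity) (by continuity) fun y => by positivity))
        (C := 1) fun x => ?_
      rw [Real.norm_eq_abs, abs_of_nonneg (by positivity), one_mul]
      have hc := Real.one_le_cosh (θ * x)
      have h1 : x ^ 4 / Real.cosh (θ * x) ^ 2 ≤ x ^ 4 := by
        apply div_le_self (by positivity)
        nlinarith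
      nlinarith [sq_nonneg x]
    have intJ : Integrable (fun y : ℝ => (y * Real.sinh (2 * θ * y) - 2 * θ * y ^ 2) /
        (2 * θ ^ 2 * Real.cosh (θ * y) ^ 2)) (mixG s) := by
      have hcongr : ∀ y : ℝ, (y * Real.sinh (2 * θ * y) - 2 * θ * y ^ 2) /
          (2 * θ ^ 2 * Real.cosh (θ * y) ^ 2)
          = (1 / θ ^ 2) * (y * Real.tanh (θ * y))
            - (1 / θ) * (y ^ 2 / Real.cosh (θ * y) ^ 2) := by
        intro y
        have hc : Real.cosh (θ * y) ≠ 0 := ne_of_gt (Real.cosh_pos _)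
        have h2 : 2 * θ * y = 2 * (θ * y) := by ring
        rw [h2, Real.sinh_two_mul, Real.tanh_eq_sinh_div_cosh]
        field_simp
      rw [show (fun y : ℝ => (y * Real.sinh (2 * θ * y) - 2 * θ * y ^ 2) /
          (2 * θ ^ 2 * Real.cosh (θ * y) ^ 2))
          = fun y : ℝ => (1 / θ ^ 2) * (y * Real.tanh (θ * y))
            - (1 / θ) * (y ^ 2 / Real.cosh (θ * y) ^ 2) from funext hcongr]
      exact ((int_f θ).const_mul _).sub (((my_emMap_deriv s θ).2).const_mul _)
    rw [show (2 * θ / 3) * ∫ y, y ^ 4 / Real.cosh (θ * y) ^ 2 ∂(mixG s)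
        = ∫ y, (2 * θ / 3) * (y ^ 4 / Real.cosh (θ * y) ^ 2) ∂(mixG s) from
      (integral_const_mul _ _).symm]
    refine integral_mono (intK.const_mul _) intJ fun y => ?_
    -- pointwise inequality
    have hc : (0:ℝ) < Real.cosh (θ * y) := Real.cosh_pos _
    have hnum : 2 * θ * y ^ 2 + (4 / 3) * θ ^ 3 * y ^ 4 ≤ y * Real.sinh (2 * θ * y) := by
      have hz : ∀ z : ℝ, 0 ≤ z → 2 * θ * z ^ 2 + (4 / 3) * θ ^ 3 * z ^ 4 ≤
          z * Real.sinh (2 * θ * z) := by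
        intro z hz
        have h := my_sinh_ge (2 * θ * z) (by positivity)
        nlinarith [mul_le_mul_of_nonneg_left h hz]
      rcases le_or_gt 0 y with hy | hy
      · exact hz y hy
      · have h := hz (-y) (by linarith)
        have h2 : Real.sinh (2 * θ * -y) = -Real.sinh (2 * θ * y) := by
          rw [show 2 * θ * -y = -(2 * θ * y) by ring, Real.sinh_neg]
        rw [h2] at h
        nlinarith [h]
    have hden : (0:ℝ) < 2 * θ ^ 2 * Real.cosh (θ * y) ^ 2 := by positivity
    have h43 : 4 / 3 * θ ^ 3 * y ^ 4 ≤ y * Real.sinh (2 * θ * y) - 2 * θ * y ^ 2 := by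
      linarith
    have hmul := mul_le_mul_of_nonneg_right h43 (sq_nonneg (Real.cosh (θ * y)))
    rw [mul_div_assoc' (2 * θ / 3), div_le_div_iff₀ (by positivity) hden]
    nlinarith [hmul]
  refine ⟨?_, fun θ hθ => ⟨hkey θ hθ, hbound θ hθ⟩⟩
  -- strict antitonicity
  apply strictAntiOn_of_deriv_neg (convex_Ioi 0)
  · intro θ hθ
    exact ((hq θ hθ).continuousAt).continuousWithinAt
  · intro θ hθ
    rw [interior_Ioi] at hθ
    have h1 := hbound θ hθ
    have h2 := my_K_pos s θ hθ
    have hθ' : (0:ℝ) < θ := hθ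
    have h3 : -(2 * θ / 3) * ∫ y, y ^ 4 / Real.cosh (θ * y) ^ 2 ∂(mixG s) < 0 := by
      apply mul_neg_of_neg_of_pos _ h2
      linarith
    linarith
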